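/- Let μ be a Borel probability measure supported on a compact set of positive definite density matrices of dimension d, and let ρ̄ = ∫ ρ dμ(ρ) be its mean (which is then a positive definite density matrix). Then for every positive definite density matrix σ, the expected quantum relative entropy satisfies ∫ Tr(ρ·(log ρ − log σ)) dμ(ρ) ≥ ∫ Tr(ρ·(log ρ − log ρ̄)) dμ(ρ), with equality if and only if σ = ρ̄. (In words: the posterior mean is the unique Bayes estimator for quantum relative entropy loss.) -/

import Mathlib

open Matrix MeasureTheory
open scoped ComplexOrder Classical

/-- A density matrix of dimension `d`: a complex `d × d` positive semidefinite matrix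
of trace 1. -/
def IsDensityMatrix {d : ℕ} (ρ : Matrix (Fin d) (Fin d) ℂ) : Prop :=
  ρ.PosSemidef ∧ ρ.trace = 1

/-- A pure state: a density matrix that is a rank-one orthogonal projection,
i.e. it satisfies `ρ * ρ = ρ` and has rank one. -/
def IsPureState {d : ℕ} (ρ : Matrix (Fin d) (Fin d) ℂ) : Prop :=
  IsDensityMatrix ρ ∧ ρ * ρ = ρ ∧ ρ.rank = 1

noncomputable instance matrixMeasurableSpace {d : ℕ} :
    MeasurableSpace (Matrix (Fin d) (Fin d) ℂ) := borel _

instance matrixBorelSpace {d : ℕ} :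
    BorelSpace (Matrix (Fin d) (Fin d) ℂ) := ⟨rfl⟩

/-- The matrix logarithm, defined by applying `Real.log` to the eigenvalues in the
spectral decomposition (continuous functional calculus) of a Hermitian matrix
(junk value `0` on non-Hermitian matrices). -/
noncomputable def matLog {d : ℕ} (A : Matrix (Fin d) (Fin d) ℂ) :
    Matrix (Fin d) (Fin d) ℂ :=
  if h : A.IsHermitian then h.cfc Real.log else 0

section Aux

variable {d : ℕ}

lemma klein_scalar {p q : ℝ} (hp : 0 < p) (hq : 0 < q) :
    0 ≤ p * Real.log p - p * Real.log q - p + q := by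
  have h := Real.log_le_sub_one_of_pos (show (0:ℝ) < q / p by positivity)
  rw [Real.log_div hq.ne' hp.ne'] at h
  have h2 : p * (Real.log q - Real.log p) ≤ p * (q / p - 1) :=
    mul_le_mul_of_nonneg_left h hp.le
  have h3 : p * (q / p - 1) = q - p := by field_simp
  nlinarith

lemma klein_scalar_eq {p q : ℝ} (hp : 0 < p) (hq : 0 < q)
    (h : p * Real.log p - p * Real.log q - p + q = 0) : p = q := by
  by_contra hne
  have h1 : q / p ≠ 1 := by
    intro hc; exact hne (by field_simp at hc; linarith)
  have h := Real.log_lt_sub_one_of_pos (show (0:ℝ) < q / p by positivity) h1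
  rw [Real.log_div hq.ne' hp.ne'] at h
  have h2 : p * (Real.log q - Real.log p) < p * (q / p - 1) :=
    (mul_lt_mul_iff_right₀ hp).mpr h
  have h3 : p * (q / p - 1) = q - p := by field_simp
  nlinarith

lemma trace_diag_conj (U V : Matrix (Fin d) (Fin d) ℂ) (p q : Fin d → ℂ) :
    ((U * Matrix.diagonal p * star U) * (V * Matrix.diagonal q * star V)).trace
      = ∑ i, ∑ j, p i * q j *
          ((star U * V) i j * star ((star U * V) i j)) := by
  have h1 : (U * Matrix.diagonal p * star U) * (V * Matrix.diagonal q * star V)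
      = U * (Matrix.diagonal p * (star U * V) * Matrix.diagonal q * star V) := by
    simp only [mul_assoc]
  rw [h1, Matrix.trace_mul_comm]
  have h2 : star (star U * V) = star V * U := by rw [StarMul.star_mul, star_star]
  rw [show Matrix.diagonal p * (star U * V) * Matrix.diagonal q * star V * U
      = Matrix.diagonal p * (star U * V) * Matrix.diagonal q * (star V * U) by
    simp only [mul_assoc], ← h2]
  simp only [Matrix.trace, Matrix.diag, Matrix.mul_apply, Matrix.diagonal_apply,
    Matrix.star_apply, ite_mul, zero_mul, mul_ite, mul_zero,
    Finset.sum_ite_eq, Finset.sum_ite_eq', Finset.mem_univ, if_true]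
  exact Finset.sum_congr rfl fun i _ => Finset.sum_congr rfl fun j _ => by ring


-- spectral rep with plain coercions
lemma spec_rep {ρ : Matrix (Fin d) (Fin d) ℂ} (h : ρ.IsHermitian) :
    ρ = (h.eigenvectorUnitary : Matrix (Fin d) (Fin d) ℂ) *
        Matrix.diagonal (fun i => ((h.eigenvalues i : ℝ) : ℂ)) *
        star (h.eigenvectorUnitary : Matrix (Fin d) (Fin d) ℂ) := by
  convert h.spectral_theorem using 2
  rw [Unitary.conjStarAlgAut_apply]; rfl

lemma matLog_rep {ρ : Matrix (Fin d) (Fin d) ℂ} (h : ρ.IsHermitian) :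
    matLog ρ = (h.eigenvectorUnitary : Matrix (Fin d) (Fin d) ℂ) *
        Matrix.diagonal (fun i => ((Real.log (h.eigenvalues i) : ℝ) : ℂ)) *
        star (h.eigenvectorUnitary : Matrix (Fin d) (Fin d) ℂ) := by
  rw [matLog, dif_pos h]
  rfl

lemma star_mul_self_eigen {ρ : Matrix (Fin d) (Fin d) ℂ} (h : ρ.IsHermitian) :
    star (h.eigenvectorUnitary : Matrix (Fin d) (Fin d) ℂ) *
      (h.eigenvectorUnitary : Matrix (Fin d) (Fin d) ℂ) = 1 :=
  Matrix.mem_unitaryGroup_iff'.mp (h.eigenvectorUnitary).2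

lemma mul_star_self_eigen {ρ : Matrix (Fin d) (Fin d) ℂ} (h : ρ.IsHermitian) :
    (h.eigenvectorUnitary : Matrix (Fin d) (Fin d) ℂ) *
      star (h.eigenvectorUnitary : Matrix (Fin d) (Fin d) ℂ) = 1 :=
  Matrix.mem_unitaryGroup_iff.mp (h.eigenvectorUnitary).2

lemma trace_conj_eq (U A : Matrix (Fin d) (Fin d) ℂ) (hU : star U * U = 1) :
    (U * A * star U).trace = A.trace := by
  rw [Matrix.trace_mul_cycle, hU, one_mul]

lemma sum_eigenvalues_eq_one {ρ : Matrix (Fin d) (Fin d) ℂ} (hd : IsDensityMatrix ρ) :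
    ∑ i, hd.1.1.eigenvalues i = 1 := by
  have h := hd.1.1
  have h1 : ρ.trace = ∑ i, ((h.eigenvalues i : ℝ) : ℂ) := by
    conv_lhs => rw [spec_rep h]
    rw [trace_conj_eq _ _ (star_mul_self_eigen h), Matrix.trace_diagonal]
  rw [hd.2] at h1
  have := congrArg Complex.re h1
  simpa using this.symm


lemma trace_mul_log_self {ρ : Matrix (Fin d) (Fin d) ℂ} (hd : IsDensityMatrix ρ)
    (hpd : ρ.PosDef) :
    ((ρ * matLog ρ).trace).re
      = ∑ i, hd.1.1.eigenvalues i * Real.log (hd.1.1.eigenvalues i) := by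
  have h : ρ.IsHermitian := hd.1.1
  have key : ∀ (U : Matrix (Fin d) (Fin d) ℂ) (p : Fin d → ℝ), star U * U = 1 →
      ρ = U * Matrix.diagonal (fun i => ((p i : ℝ) : ℂ)) * star U →
      matLog ρ = U * Matrix.diagonal (fun i => ((Real.log (p i) : ℝ) : ℂ)) * star U →
      (ρ * matLog ρ).trace = ((∑ i, p i * Real.log (p i) : ℝ) : ℂ) := by
    intro U p hU hρe hLρ
    conv_lhs => rw [hLρ]
    conv_lhs => rw [hρe]
    rw [trace_diag_conj, hU]
    push_cast
    rw [Finset.sum_comm]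
    simp [Matrix.one_apply, apply_ite, Finset.sum_ite_eq, mul_ite, ite_mul]
  have hT1 := key _ _ (star_mul_self_eigen h) (spec_rep h) (matLog_rep h)
  rw [hT1]
  simp

lemma klein_matrix {ρ σ : Matrix (Fin d) (Fin d) ℂ}
    (hρd : IsDensityMatrix ρ) (hρ : ρ.PosDef)
    (hσd : IsDensityMatrix σ) (hσ : σ.PosDef) :
    0 ≤ ((ρ * (matLog ρ - matLog σ)).trace).re ∧
      (((ρ * (matLog ρ - matLog σ)).trace).re = 0 ↔ ρ = σ) := by
  have hρh : ρ.IsHermitian := hρd.1.1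
  have hσh : σ.IsHermitian := hσd.1.1
  set U : Matrix (Fin d) (Fin d) ℂ := (hρh.eigenvectorUnitary : Matrix (Fin d) (Fin d) ℂ) with hU
  set V : Matrix (Fin d) (Fin d) ℂ := (hσh.eigenvectorUnitary : Matrix (Fin d) (Fin d) ℂ) with hV
  set p : Fin d → ℝ := hρh.eigenvalues with hp
  set q : Fin d → ℝ := hσh.eigenvalues with hq
  have hpp : ∀ i, 0 < p i := hρ.eigenvalues_pos
  have hqp : ∀ i, 0 < q i := hσ.eigenvalues_pos
  have hps : ∑ i, p i = 1 := sum_eigenvalues_eq_one hρd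
  have hqs : ∑ i, q i = 1 := sum_eigenvalues_eq_one hσd
  have hUsU : star U * U = 1 := star_mul_self_eigen hρh
  have hUUs : U * star U = 1 := mul_star_self_eigen hρh
  have hVsV : star V * V = 1 := star_mul_self_eigen hσh
  have hVVs : V * star V = 1 := mul_star_self_eigen hσh
  set W : Matrix (Fin d) (Fin d) ℂ := star U * V with hW
  set c : Fin d → Fin d → ℝ := fun i j => Complex.normSq (W i j) with hc
  -- row and column sums
  have hWWs : W * star W = 1 := by
    rw [hW, StarMul.star_mul, star_star, mul_assoc, ← mul_assoc V, hVVs, one_mul, hUsU]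
  have hWsW : star W * W = 1 := by
    rw [hW, StarMul.star_mul, star_star, mul_assoc, ← mul_assoc U, hUUs, one_mul, hVsV]
  have hrow : ∀ i, ∑ j, c i j = 1 := by
    intro i
    have h1 := congrFun (congrFun hWWs i) i
    rw [Matrix.mul_apply] at h1
    simp only [Matrix.star_apply, Matrix.one_apply_eq] at h1
    have h3 : (∑ j, W i j * star (W i j)) = ((∑ j, c i j : ℝ) : ℂ) := by
      push_cast
      refine Finset.sum_congr rfl fun j _ => ?_
      rw [hc]
      rw [show star (W i j) = starRingEnd ℂ (W i j) from rfl, Complex.mul_conj]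
    rw [h3] at h1
    exact_mod_cast h1
  have hcol : ∀ j, ∑ i, c i j = 1 := by
    intro j
    have h1 := congrFun (congrFun hWsW j) j
    rw [Matrix.mul_apply] at h1
    simp only [Matrix.star_apply, Matrix.one_apply_eq] at h1
    have h3 : (∑ i, star (W i j) * W i j) = ((∑ i, c i j : ℝ) : ℂ) := by
      push_cast
      refine Finset.sum_congr rfl fun i _ => ?_
      rw [hc, mul_comm]
      rw [show star (W i j) = starRingEnd ℂ (W i j) from rfl, Complex.mul_conj]
    rw [h3] at h1
    exact_mod_cast h1
  have hρe : ρ = U * Matrix.diagonal (fun i => ((p i : ℝ) : ℂ)) * star U := spec_rep hρh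
  have hσe : σ = V * Matrix.diagonal (fun j => ((q j : ℝ) : ℂ)) * star V := spec_rep hσh
  have hLρ : matLog ρ = U * Matrix.diagonal (fun i => ((Real.log (p i) : ℝ) : ℂ)) * star U :=
    matLog_rep hρh
  have hLσ : matLog σ = V * Matrix.diagonal (fun j => ((Real.log (q j) : ℝ) : ℂ)) * star V :=
    matLog_rep hσh
  -- the trace as a real double sum
  have key : ((ρ * (matLog ρ - matLog σ)).trace).re
      = ∑ i, ∑ j, c i j *
          (p i * Real.log (p i) - p i * Real.log (q j) - p i + q j) := by
    have hT : ρ * (matLog ρ - matLog σ) = ρ * matLog ρ - ρ * matLog σ := mul_sub _ _ _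
    rw [hT, Matrix.trace_sub]
    have hT1 : (ρ * matLog ρ).trace = ((∑ i, p i * Real.log (p i) : ℝ) : ℂ) := by
      conv_lhs => rw [hLρ]
      conv_lhs => rw [hρe]
      rw [trace_diag_conj, hUsU]
      push_cast
      rw [Finset.sum_comm]
      simp [Matrix.one_apply, apply_ite, Finset.sum_ite_eq, mul_ite, ite_mul]
    have hT2 : (ρ * matLog σ).trace
        = ((∑ i, ∑ j, c i j * (p i * Real.log (q j)) : ℝ) : ℂ) := by
      conv_lhs => rw [hLσ]
      conv_lhs => rw [hρe]
      rw [trace_diag_conj]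
      push_cast
      refine Finset.sum_congr rfl fun i _ => Finset.sum_congr rfl fun j _ => ?_
      rw [hc, show star (W i j) = starRingEnd ℂ (W i j) from rfl, Complex.mul_conj]
      push_cast
      ring
    rw [hT1, hT2, ← Complex.ofReal_sub, Complex.ofReal_re]
    -- now a purely real computation
    have e1 : ∑ i, p i * Real.log (p i)
        = ∑ i, ∑ j, c i j * (p i * Real.log (p i)) := by
      refine Finset.sum_congr rfl fun i _ => ?_
      rw [← Finset.sum_mul, hrow, one_mul]
    have e2 : ∑ i, ∑ j, c i j * p i = 1 := by
      rw [show ∑ i, ∑ j, c i j * p i = ∑ i, (∑ j, c i j) * p i by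
        exact Finset.sum_congr rfl fun i _ => by rw [Finset.sum_mul]]
      simp only [hrow, one_mul, hps]
    have e3 : ∑ i, ∑ j, c i j * q j = 1 := by
      rw [Finset.sum_comm]
      rw [show ∑ j, ∑ i, c i j * q j = ∑ j, (∑ i, c i j) * q j by
        exact Finset.sum_congr rfl fun j _ => by rw [Finset.sum_mul]]
      simp only [hcol, one_mul, hqs]
    have expand : ∀ i j, c i j *
        (p i * Real.log (p i) - p i * Real.log (q j) - p i + q j)
        = c i j * (p i * Real.log (p i)) - c i j * (p i * Real.log (q j))
          - c i j * p i + c i j * q j := fun i j => by ring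
    simp only [expand, Finset.sum_add_distrib, Finset.sum_sub_distrib]
    rw [← e1, e2, e3]
    ring
  constructor
  · rw [key]
    refine Finset.sum_nonneg fun i _ => Finset.sum_nonneg fun j _ => ?_
    exact mul_nonneg (Complex.normSq_nonneg _) (klein_scalar (hpp i) (hqp j))
  · constructor
    · intro h0
      rw [key] at h0
      have hz : ∀ i ∈ Finset.univ, ∀ j ∈ (Finset.univ : Finset (Fin d)),
          c i j * (p i * Real.log (p i) - p i * Real.log (q j) - p i + q j) = 0 := by
        intro i _
        have h1 := (Finset.sum_eq_zero_iff_of_nonneg (fun i _ =>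
          Finset.sum_nonneg fun j _ =>
            mul_nonneg (Complex.normSq_nonneg _) (klein_scalar (hpp i) (hqp j)))).mp h0 i
          (Finset.mem_univ i)
        exact fun j hj => (Finset.sum_eq_zero_iff_of_nonneg (fun j _ =>
          mul_nonneg (Complex.normSq_nonneg _) (klein_scalar (hpp i) (hqp j)))).mp h1 j hj
      have hDW : Matrix.diagonal (fun i => ((p i : ℝ) : ℂ)) * W
          = W * Matrix.diagonal (fun j => ((q j : ℝ) : ℂ)) := by
        ext i j
        rw [Matrix.diagonal_mul, Matrix.mul_diagonal]
        by_cases hWij : W i j = 0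
        · rw [hWij, mul_zero, zero_mul]
        · have hcij : c i j ≠ 0 := by
            rw [hc]; simpa using hWij
          have hf := hz i (Finset.mem_univ i) j (Finset.mem_univ j)
          have : p i * Real.log (p i) - p i * Real.log (q j) - p i + q j = 0 :=
            (mul_eq_zero.mp hf).resolve_left hcij
          rw [klein_scalar_eq (hpp i) (hqp j) this, mul_comm]
      -- reconstruct ρ = σ
      calc ρ = U * Matrix.diagonal (fun i => ((p i : ℝ) : ℂ)) * star U := hρe
        _ = U * Matrix.diagonal (fun i => ((p i : ℝ) : ℂ)) * star U * (V * star V) := by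
            rw [hVVs, mul_one]
        _ = U * (Matrix.diagonal (fun i => ((p i : ℝ) : ℂ)) * W) * star V := by
            rw [hW]; simp only [mul_assoc]
        _ = U * (W * Matrix.diagonal (fun j => ((q j : ℝ) : ℂ))) * star V := by rw [hDW]
        _ = (U * star U) * (V * Matrix.diagonal (fun j => ((q j : ℝ) : ℂ)) * star V) := by
            rw [hW]; simp only [mul_assoc]
        _ = σ := by rw [hUUs, one_mul, ← hσe]
    · intro h0
      subst h0
      simp

/-- conjugation by a unitary as an `ℝ`-algebra hom -/
noncomputable def conjAH (U : Matrix (Fin d) (Fin d) ℂ) (h1 : U * star U = 1)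
    (h2 : star U * U = 1) :
    Matrix (Fin d) (Fin d) ℂ →ₐ[ℝ] Matrix (Fin d) (Fin d) ℂ where
  toFun X := U * X * star U
  map_one' := by show U * 1 * star U = 1; rw [mul_one, h1]
  map_mul' X Y := by
    have h : star U * (U * (Y * star U)) = Y * star U := by
      rw [← mul_assoc, h2, one_mul]
    simp only [mul_assoc, h]
  map_zero' := by simp
  map_add' X Y := by simp [mul_add, add_mul]
  commutes' r := by
    simp only [Algebra.algebraMap_eq_smul_one, mul_smul_comm, smul_mul_assoc, mul_one, h1]

lemma aeval_conj (U : Matrix (Fin d) (Fin d) ℂ) (h1 : U * star U = 1)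
    (h2 : star U * U = 1) (A : Matrix (Fin d) (Fin d) ℂ) (P : Polynomial ℝ) :
    Polynomial.aeval (U * A * star U) P = U * (Polynomial.aeval A P) * star U :=
  Polynomial.aeval_algHom_apply (conjAH U h1 h2) A P

lemma trace_aeval_spec {ρ : Matrix (Fin d) (Fin d) ℂ} (h : ρ.IsHermitian)
    (P : Polynomial ℝ) :
    ((Polynomial.aeval ρ P).trace) = ((∑ i, P.eval (h.eigenvalues i) : ℝ) : ℂ) := by
  conv_lhs => rw [spec_rep h]
  rw [aeval_conj _ (mul_star_self_eigen h) (star_mul_self_eigen h),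
    trace_conj_eq _ _ (star_mul_self_eigen h)]
  have h2 : (Matrix.diagonal (fun i => ((h.eigenvalues i : ℝ) : ℂ)))
      = Matrix.diagonalAlgHom ℝ (fun i => ((h.eigenvalues i : ℝ) : ℂ)) := rfl
  rw [h2, Polynomial.aeval_algHom_apply]
  show (Matrix.diagonal _).trace = _
  rw [Matrix.trace_diagonal]
  push_cast
  refine Finset.sum_congr rfl fun i _ => ?_
  have h3 : (Polynomial.aeval (fun i => ((h.eigenvalues i : ℝ) : ℂ)) P) i
      = Polynomial.aeval ((h.eigenvalues i : ℝ) : ℂ) P :=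
    (Polynomial.aeval_algHom_apply (Pi.evalAlgHom ℝ (fun _ : Fin d => ℂ) i)
      (fun i => ((h.eigenvalues i : ℝ) : ℂ)) P).symm
  rw [h3, show ((h.eigenvalues i : ℝ) : ℂ) = algebraMap ℝ ℂ (h.eigenvalues i) from rfl,
    Polynomial.aeval_algebraMap_apply_eq_algebraMap_eval]
  rfl

lemma cont_aeval_trace (P : Polynomial ℝ) :
    Continuous fun ρ : Matrix (Fin d) (Fin d) ℂ => ((Polynomial.aeval ρ P).trace).re :=
  Complex.continuous_re.comp ((P.continuous_aeval).matrix_trace)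

lemma integrable_of_continuous {μ : Measure (Matrix (Fin d) (Fin d) ℂ)} [IsFiniteMeasure μ]
    {K : Set (Matrix (Fin d) (Fin d) ℂ)} (hK : IsCompact K) (hμK : μ Kᶜ = 0)
    {E : Type*} [NormedAddCommGroup E] {f : Matrix (Fin d) (Fin d) ℂ → E}
    (hf : Continuous f) : Integrable f μ := by
  have h1 : μ.restrict K = μ :=
    Measure.restrict_eq_self_of_ae_mem (by rw [MeasureTheory.ae_iff]; exact hμK)
  rw [← h1]
  exact hf.continuousOn.integrableOn_compact hK

lemma eig_le_one {ρ : Matrix (Fin d) (Fin d) ℂ} (hd : IsDensityMatrix ρ) (i : Fin d) :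
    hd.1.1.eigenvalues i ≤ 1 := by
  have h := sum_eigenvalues_eq_one hd
  have h2 : ∀ j ∈ Finset.univ, 0 ≤ hd.1.1.eigenvalues j := fun j _ =>
    hd.1.eigenvalues_nonneg j
  calc hd.1.1.eigenvalues i ≤ ∑ j, hd.1.1.eigenvalues j :=
        Finset.single_le_sum h2 (Finset.mem_univ i)
    _ = 1 := h

lemma abs_mul_log_le_one {x : ℝ} (hx : 0 < x) (hx1 : x ≤ 1) : |x * Real.log x| ≤ 1 := by
  have h1 : Real.log x ≤ 0 := Real.log_nonpos hx.le hx1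
  have h2 := Real.log_le_sub_one_of_pos (inv_pos.mpr hx)
  rw [Real.log_inv] at h2
  have h3 : x * x⁻¹ = 1 := mul_inv_cancel₀ hx.ne'
  have h4 : x * Real.log x ≤ 0 := mul_nonpos_of_nonneg_of_nonpos hx.le h1
  rw [abs_of_nonpos h4]
  nlinarith

lemma integrable_entropy {μ : Measure (Matrix (Fin d) (Fin d) ℂ)} [IsProbabilityMeasure μ]
    {K : Set (Matrix (Fin d) (Fin d) ℂ)} (hK : IsCompact K)
    (hKsub : ∀ ρ ∈ K, IsDensityMatrix ρ ∧ ρ.PosDef) (hμK : μ Kᶜ = 0) :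
    Integrable (fun ρ => ((ρ * matLog ρ).trace).re) μ := by
  have hmemK : ∀ᵐ ρ ∂μ, ρ ∈ K := by rw [MeasureTheory.ae_iff]; exact hμK
  have hcont : ContinuousOn (fun x : ℝ => x * Real.log x) (Set.Icc 0 1) :=
    Real.continuous_mul_log.continuousOn
  have hPn : ∀ n : ℕ, ∃ P : Polynomial ℝ,
      ∀ x ∈ Set.Icc (0:ℝ) 1, |P.eval x - x * Real.log x| < 1/(n+1) := fun n =>
    exists_polynomial_near_of_continuousOn 0 1 _ hcont _ (by positivity)
  choose P hP using hPn
  have hptwise : ∀ ρ ∈ K, ∀ n : ℕ,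
      |((Polynomial.aeval ρ (P n)).trace).re - ((ρ * matLog ρ).trace).re|
        ≤ d * (1/(n+1)) := by
    intro ρ hρ n
    obtain ⟨hd', hpd⟩ := hKsub ρ hρ
    have hherm : ρ.IsHermitian := hd'.1.1
    have e1 : ((Polynomial.aeval ρ (P n)).trace).re
        = ∑ i, (P n).eval (hherm.eigenvalues i) := by
      rw [trace_aeval_spec hherm (P n)]; simp
    have e2 := trace_mul_log_self hd' hpd
    rw [e1, e2, ← Finset.sum_sub_distrib]
    calc |∑ i, ((P n).eval (hd'.1.1.eigenvalues i)
            - hd'.1.1.eigenvalues i * Real.log (hd'.1.1.eigenvalues i))|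
        ≤ ∑ i, |(P n).eval (hd'.1.1.eigenvalues i)
            - hd'.1.1.eigenvalues i * Real.log (hd'.1.1.eigenvalues i)| :=
          Finset.abs_sum_le_sum_abs _ _
      _ ≤ ∑ _i : Fin d, 1/((n:ℝ)+1) := Finset.sum_le_sum fun i _ => by
          refine (hP n (hd'.1.1.eigenvalues i) ⟨(hpd.eigenvalues_pos i).le,
            eig_le_one hd' i⟩).le
      _ = d * (1/(n+1)) := by simp [mul_comm]
  have hae : ∀ᵐ ρ ∂μ, Filter.Tendsto (fun n => ((Polynomial.aeval ρ (P n)).trace).re)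
      Filter.atTop (nhds (((ρ * matLog ρ).trace).re)) := by
    filter_upwards [hmemK] with ρ hρ
    rw [← tendsto_sub_nhds_zero_iff]
    apply squeeze_zero_norm (fun n => hptwise ρ hρ n)
    have : Filter.Tendsto (fun n : ℕ => 1/((n:ℝ)+1)) Filter.atTop (nhds 0) :=
      tendsto_one_div_add_atTop_nhds_zero_nat
    simpa using this.const_mul (d : ℝ)
  have hmeas : AEMeasurable (fun ρ => ((ρ * matLog ρ).trace).re) μ :=
    aemeasurable_of_tendsto_metrizable_ae _
      (fun n => (cont_aeval_trace (P n)).measurable.aemeasurable) hae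
  refine Integrable.mono' (integrable_const (d : ℝ)) hmeas.aestronglyMeasurable ?_
  filter_upwards [hmemK] with ρ hρ
  obtain ⟨hd', hpd⟩ := hKsub ρ hρ
  rw [trace_mul_log_self hd' hpd]
  calc ‖∑ i, hd'.1.1.eigenvalues i * Real.log (hd'.1.1.eigenvalues i)‖
      ≤ ∑ i, ‖hd'.1.1.eigenvalues i * Real.log (hd'.1.1.eigenvalues i)‖ :=
        norm_sum_le _ _
    _ ≤ ∑ _i : Fin d, 1 := Finset.sum_le_sum fun i _ => by
        rw [Real.norm_eq_abs]
        exact abs_mul_log_le_one (hpd.eigenvalues_pos i) (eig_le_one hd' i)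
    _ = d := by simp

end Aux

/-- Let `μ` be a Borel probability measure supported on a compact set of
positive definite density matrices, with mean `ρ̄ = ∫ ρ dμ(ρ)`. Then for every positive
definite density matrix `σ`,
`∫ Tr(ρ (log ρ − log σ)) dμ(ρ) ≥ ∫ Tr(ρ (log ρ − log ρ̄)) dμ(ρ)`, with equality iff
`σ = ρ̄`: the posterior mean is the unique Bayes estimator for quantum relative entropy
loss. -/
theorem relativeEntropy_bayes_estimator_is_mean {d : ℕ}
    (μ : Measure (Matrix (Fin d) (Fin d) ℂ)) [IsProbabilityMeasure μ]
    (K : Set (Matrix (Fin d) (Fin d) ℂ)) (hKcompact : IsCompact K)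
    (hKsub : ∀ ρ ∈ K, IsDensityMatrix ρ ∧ ρ.PosDef)
    (hμK : μ Kᶜ = 0)
    (ρbar : Matrix (Fin d) (Fin d) ℂ)
    (hρbar : ρbar = Matrix.of fun i j => ∫ ρ, ρ i j ∂μ) :
    ∀ σ, IsDensityMatrix σ → σ.PosDef →
      (∫ ρ, ((ρ * (matLog ρ - matLog ρbar)).trace).re ∂μ)
          ≤ (∫ ρ, ((ρ * (matLog ρ - matLog σ)).trace).re ∂μ) ∧
      ((∫ ρ, ((ρ * (matLog ρ - matLog σ)).trace).re ∂μ)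
          = (∫ ρ, ((ρ * (matLog ρ - matLog ρbar)).trace).re ∂μ) ↔ σ = ρbar) := by
  intro σ hσd hσpd
  have hmemK : ∀ᵐ ρ ∂μ, ρ ∈ K := by rw [MeasureTheory.ae_iff]; exact hμK
  -- basic integrability of entries
  have hent : ∀ i j, Integrable (fun ρ : Matrix (Fin d) (Fin d) ℂ => ρ i j) μ := fun i j =>
    integrable_of_continuous hKcompact hμK (continuous_apply_apply i j)
  have hρbar_apply : ∀ i j, ρbar i j = ∫ ρ, ρ i j ∂μ := fun i j => by rw [hρbar]; rfl
  -- expected value of linear trace functionals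
  have mean_trace : ∀ B : Matrix (Fin d) (Fin d) ℂ,
      ∫ ρ, ((ρ * B).trace).re ∂μ = ((ρbar * B).trace).re := by
    intro B
    have htr : ∀ A : Matrix (Fin d) (Fin d) ℂ,
        (A * B).trace = ∑ i, ∑ j, A i j * B j i := fun A => by
      simp [Matrix.trace, Matrix.diag, Matrix.mul_apply]
    have hint : ∀ i j, Integrable (fun ρ : Matrix (Fin d) (Fin d) ℂ => ρ i j * B j i) μ :=
      fun i j => (hent i j).mul_const _
    have hTint : Integrable (fun ρ : Matrix (Fin d) (Fin d) ℂ => (ρ * B).trace) μ := by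
      simp_rw [htr]
      exact integrable_finset_sum _ fun i _ => integrable_finset_sum _ fun j _ => hint i j
    have hC : ∫ ρ, ((ρ * B).trace) ∂μ = (ρbar * B).trace := by
      rw [htr]
      calc ∫ ρ, ((ρ * B).trace) ∂μ
          = ∫ ρ, ∑ i, ∑ j, ρ i j * B j i ∂μ := by simp_rw [htr]
        _ = ∑ i, ∑ j, ∫ ρ, ρ i j * B j i ∂μ := by
            rw [integral_finset_sum _ fun i _ => integrable_finset_sum _ fun j _ => hint i j]
            exact Finset.sum_congr rfl fun i _ =>
              integral_finset_sum _ fun j _ => hint i j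
        _ = ∑ i, ∑ j, ρbar i j * B j i := by
            refine Finset.sum_congr rfl fun i _ => Finset.sum_congr rfl fun j _ => ?_
            rw [integral_mul_const, hρbar_apply]
    calc ∫ ρ, ((ρ * B).trace).re ∂μ = (∫ ρ, ((ρ * B).trace) ∂μ).re := by
          simpa using integral_re hTint
      _ = ((ρbar * B).trace).re := by rw [hC]
  -- ρbar is hermitian
  have hbarherm : ρbar.IsHermitian := by
    ext i j
    rw [Matrix.conjTranspose_apply, hρbar_apply, hρbar_apply]
    calc star (∫ ρ, ρ j i ∂μ) = ∫ ρ, (starRingEnd ℂ) (ρ j i) ∂μ := (integral_conj).symm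
      _ = ∫ ρ, ρ i j ∂μ := by
          refine integral_congr_ae ?_
          filter_upwards [hmemK] with ρ hρ
          have hh := (hKsub ρ hρ).1.1.1
          conv_rhs => rw [← hh]
          rw [Matrix.conjTranspose_apply]
          rfl
  have hbartr : ρbar.trace = 1 := by
    have h1 : ρbar.trace = ∫ ρ, (ρ : Matrix (Fin d) (Fin d) ℂ).trace ∂μ := by
      simp only [Matrix.trace, Matrix.diag, hρbar_apply]
      rw [integral_finset_sum _ fun i _ => hent i i]
    rw [h1]
    have h2 : ∫ ρ, (ρ : Matrix (Fin d) (Fin d) ℂ).trace ∂μ = ∫ _ρ, (1 : ℂ) ∂μ := by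
      refine integral_congr_ae ?_
      filter_upwards [hmemK] with ρ hρ
      exact (hKsub ρ hρ).1.2
    rw [h2]
    simp
  -- quadratic forms
  have hquadf : ∀ (A : Matrix (Fin d) (Fin d) ℂ) (x : Fin d → ℂ),
      star x ⬝ᵥ A *ᵥ x = ∑ i, ∑ j, star (x i) * (A i j * x j) := by
    intro A x
    simp [dotProduct, Matrix.mulVec, Finset.mul_sum]
  have hQint : ∀ x : Fin d → ℂ,
      Integrable (fun ρ : Matrix (Fin d) (Fin d) ℂ => star x ⬝ᵥ ρ *ᵥ x) μ := fun x =>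
    integrable_of_continuous hKcompact hμK
      (continuous_const.dotProduct (continuous_id.matrix_mulVec continuous_const))
  have hq : ∀ x : Fin d → ℂ,
      star x ⬝ᵥ ρbar *ᵥ x = ∫ ρ, star x ⬝ᵥ ρ *ᵥ x ∂μ := by
    intro x
    have hint : ∀ i j, Integrable
        (fun ρ : Matrix (Fin d) (Fin d) ℂ => star (x i) * (ρ i j * x j)) μ := fun i j =>
      (((hent i j).mul_const (x j)).const_mul _)
    rw [hquadf]
    calc ∑ i, ∑ j, star (x i) * (ρbar i j * x j)
        = ∑ i, ∑ j, ∫ ρ, star (x i) * (ρ i j * x j) ∂μ := by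
          refine Finset.sum_congr rfl fun i _ => Finset.sum_congr rfl fun j _ => ?_
          rw [hρbar_apply, ← integral_mul_const, ← integral_const_mul]
      _ = ∫ ρ, ∑ i, ∑ j, star (x i) * (ρ i j * x j) ∂μ := by
          rw [integral_finset_sum _ fun i _ => integrable_finset_sum _ fun j _ => hint i j]
          exact Finset.sum_congr rfl fun i _ =>
            (integral_finset_sum _ fun j _ => hint i j).symm
      _ = ∫ ρ, star x ⬝ᵥ ρ *ᵥ x ∂μ := by
          refine integral_congr_ae (Filter.Eventually.of_forall fun ρ => ?_)
          exact (hquadf ρ x).symm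
  have him_int : ∀ f : Matrix (Fin d) (Fin d) ℂ → ℂ, Integrable f μ →
      (∫ ρ, f ρ ∂μ).im = ∫ ρ, (f ρ).im ∂μ := fun f hf => by
    simpa using (integral_im hf).symm
  have hre_int : ∀ f : Matrix (Fin d) (Fin d) ℂ → ℂ, Integrable f μ →
      (∫ ρ, f ρ ∂μ).re = ∫ ρ, (f ρ).re ∂μ := fun f hf => by
    simpa using (integral_re hf).symm
  have hQim : ∀ x : Fin d → ℂ, (star x ⬝ᵥ ρbar *ᵥ x).im = 0 := by
    intro x
    rw [hq x, him_int _ (hQint x)]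
    have h0 : ∫ ρ, (star x ⬝ᵥ ρ *ᵥ x).im ∂μ = ∫ _ρ, (0:ℝ) ∂μ := by
      refine integral_congr_ae ?_
      filter_upwards [hmemK] with ρ hρ
      exact ((Complex.nonneg_iff.mp ((hKsub ρ hρ).1.1.dotProduct_mulVec_nonneg x)).2).symm
    simpa using h0
  have hbarpsd : ρbar.PosSemidef := by
    refine .of_dotProduct_mulVec_nonneg hbarherm fun x => ?_
    rw [Complex.nonneg_iff]
    refine ⟨?_, (hQim x).symm⟩
    rw [hq x, hre_int _ (hQint x)]
    refine integral_nonneg_of_ae ?_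
    filter_upwards [hmemK] with ρ hρ
    exact (Complex.nonneg_iff.mp ((hKsub ρ hρ).1.1.dotProduct_mulVec_nonneg x)).1
  have hbarpd : ρbar.PosDef := by
    refine .of_dotProduct_mulVec_pos hbarherm fun x hx => ?_
    rw [Complex.pos_iff]
    refine ⟨?_, (hQim x).symm⟩
    rw [hq x, hre_int _ (hQint x)]
    have hfnn : 0 ≤ᵐ[μ] fun ρ => (star x ⬝ᵥ ρ *ᵥ x).re := by
      filter_upwards [hmemK] with ρ hρ
      exact (Complex.nonneg_iff.mp ((hKsub ρ hρ).1.1.dotProduct_mulVec_nonneg x)).1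
    have hfint : Integrable (fun ρ : Matrix (Fin d) (Fin d) ℂ => (star x ⬝ᵥ ρ *ᵥ x).re) μ :=
      (hQint x).re
    rcases lt_or_eq_of_le (integral_nonneg_of_ae hfnn) with h | h
    · exact h
    · exfalso
      have hz : (fun ρ => (star x ⬝ᵥ ρ *ᵥ x).re) =ᵐ[μ] 0 :=
        (integral_eq_zero_iff_of_nonneg_ae hfnn hfint).mp h.symm
      obtain ⟨ρ0, hρ0K, hρ0z⟩ := (hmemK.and hz).exists
      have hpos := (hKsub ρ0 hρ0K).2.dotProduct_mulVec_pos hx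
      rw [Complex.pos_iff] at hpos
      rw [Pi.zero_apply] at hρ0z
      exact absurd hρ0z hpos.1.ne'
  have hbard : IsDensityMatrix ρbar := ⟨hbarpsd, hbartr⟩
  -- splitting the entropy integral
  have hg : Integrable (fun ρ => ((ρ * matLog ρ).trace).re) μ :=
    integrable_entropy hKcompact hKsub hμK
  have hsplit : ∀ τ : Matrix (Fin d) (Fin d) ℂ,
      ∫ ρ, ((ρ * (matLog ρ - matLog τ)).trace).re ∂μ
        = (∫ ρ, ((ρ * matLog ρ).trace).re ∂μ) - ((ρbar * matLog τ).trace).re := by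
    intro τ
    have h1 : ∀ ρ : Matrix (Fin d) (Fin d) ℂ, ((ρ * (matLog ρ - matLog τ)).trace).re
        = ((ρ * matLog ρ).trace).re - ((ρ * matLog τ).trace).re := fun ρ => by
      rw [mul_sub, Matrix.trace_sub, Complex.sub_re]
    have hτint : Integrable
        (fun ρ : Matrix (Fin d) (Fin d) ℂ => ((ρ * matLog τ).trace).re) μ :=
      integrable_of_continuous hKcompact hμK (by
        exact Complex.continuous_re.comp
          ((continuous_id.matrix_mul continuous_const).matrix_trace))
    simp_rw [h1]
    rw [integral_sub hg hτint, mean_trace]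
  have hklein := klein_matrix hbard hbarpd hσd hσpd
  have hdiff : (∫ ρ, ((ρ * (matLog ρ - matLog σ)).trace).re ∂μ)
      - (∫ ρ, ((ρ * (matLog ρ - matLog ρbar)).trace).re ∂μ)
      = ((ρbar * (matLog ρbar - matLog σ)).trace).re := by
    rw [hsplit σ, hsplit ρbar, mul_sub, Matrix.trace_sub, Complex.sub_re]
    ring
  constructor
  · linarith [hklein.1, hdiff]
  · constructor
    · intro h0
      have hz : ((ρbar * (matLog ρbar - matLog σ)).trace).re = 0 := by
        rw [← hdiff, h0]; ring
      exact (hklein.2.mp hz).symm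
    · intro h0
      rw [h0]
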